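/- (Gordan's theorem) Let A be an m×n real matrix. Then exactly one of the following holds: (1) there exists y ∈ ℝᵐ with yᵀA > 0 componentwise (every entry of yᵀA strictly positive); (2) there exists a nonzero x ∈ ℝⁿ with x ≥ 0 componentwise and Ax = 0. -/

import Mathlib

open Matrix Finset

private lemma gordan_not_both {m n : ℕ} (A : Matrix (Fin m) (Fin n) ℝ)
    (hP : ∃ y : Fin m → ℝ, ∀ j : Fin n, 0 < Matrix.vecMul y A j)
    (hQ : ∃ x : Fin n → ℝ, x ≠ 0 ∧ (∀ j, 0 ≤ x j) ∧ Matrix.mulVec A x = 0) : False := by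
  obtain ⟨y, hy⟩ := hP
  obtain ⟨x, hx0, hxnn, hAx⟩ := hQ
  have h0 : Matrix.vecMul y A ⬝ᵥ x = 0 := by
    rw [← Matrix.dotProduct_mulVec, hAx, dotProduct_zero]
  have hpos : 0 < Matrix.vecMul y A ⬝ᵥ x := by
    obtain ⟨j, hj⟩ : ∃ j, x j ≠ 0 := by
      by_contra h
      push_neg at h
      exact hx0 (funext h)
    apply Finset.sum_pos'
    · intro i _
      exact mul_nonneg (le_of_lt (hy i)) (hxnn i)
    · exact ⟨j, Finset.mem_univ j, mul_pos (hy j) (lt_of_le_of_ne (hxnn j) (Ne.symm hj))⟩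
  linarith

private lemma gordan_exists {m n : ℕ} (A : Matrix (Fin m) (Fin n) ℝ)
    (hQ : ¬ ∃ x : Fin n → ℝ, x ≠ 0 ∧ (∀ j, 0 ≤ x j) ∧ Matrix.mulVec A x = 0) :
    ∃ y : Fin m → ℝ, ∀ j : Fin n, 0 < Matrix.vecMul y A j := by
  rcases Nat.eq_zero_or_pos n with hn | hn
  · subst hn
    exact ⟨0, fun j => absurd j.2 (by simp)⟩
  -- image of the standard simplex under A
  set T : Set (Fin m → ℝ) := (fun x => A.mulVec x) '' stdSimplex ℝ (Fin n) with hT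
  have hTconv : Convex ℝ T := (convex_stdSimplex ℝ (Fin n)).linear_image A.mulVecLin
  have hcont : Continuous fun x : Fin n → ℝ => A.mulVec x :=
    A.mulVecLin.continuous_of_finiteDimensional
  have hTcomp : IsCompact T := (isCompact_stdSimplex ℝ (Fin n)).image hcont
  have h0T : (0 : Fin m → ℝ) ∉ T := by
    rintro ⟨x, hxs, hAx⟩
    apply hQ
    refine ⟨x, ?_, hxs.1, hAx⟩
    intro h
    have := hxs.2
    rw [h] at this
    simp at this
  have hdisj : Disjoint ({(0 : Fin m → ℝ)} : Set (Fin m → ℝ)) T := by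
    rw [Set.disjoint_singleton_left]; exact h0T
  obtain ⟨f, u, v, hfu, huv, hfv⟩ :=
    geometric_hahn_banach_compact_closed (convex_singleton (0 : Fin m → ℝ))
      isCompact_singleton hTconv hTcomp.isClosed hdisj
  have hu0 : 0 < u := by
    have := hfu 0 rfl
    simpa using this
  refine ⟨fun i => f (fun k => if i = k then 1 else 0), fun j => ?_⟩
  -- the j-th standard basis vector is in the simplex
  have hej : (fun k => if j = k then (1:ℝ) else 0) ∈ stdSimplex ℝ (Fin n) := by
    constructor
    · intro i; dsimp only; split <;> norm_num
    · simp
  have hmem : A.mulVec (fun k => if j = k then (1:ℝ) else 0) ∈ T := ⟨_, hej, rfl⟩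
  have hfpos : 0 < f (A.mulVec (fun k => if j = k then (1:ℝ) else 0)) :=
    lt_trans (lt_trans hu0 huv) (hfv _ hmem)
  have hrep : f (A.mulVec (fun k => if j = k then (1:ℝ) else 0))
      = Matrix.vecMul (fun i => f (fun k => if i = k then 1 else 0)) A j := by
    have hcol : A.mulVec (fun k => if j = k then (1:ℝ) else 0) = fun i => A i j := by
      funext i
      simp [Matrix.mulVec, dotProduct, mul_ite]
    rw [hcol]
    have := LinearMap.pi_apply_eq_sum_univ (f.toLinearMap) (fun i => A i j)
    simp only [ContinuousLinearMap.coe_coe] at this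
    rw [this, Matrix.vecMul]
    simp [dotProduct, smul_eq_mul, mul_comm]
  rw [← hrep]
  exact hfpos

theorem gordan {m n : ℕ} (A : Matrix (Fin m) (Fin n) ℝ) :
    Xor'
      (∃ y : Fin m → ℝ, ∀ j : Fin n, 0 < Matrix.vecMul y A j)
      (∃ x : Fin n → ℝ, x ≠ 0 ∧ (∀ j, 0 ≤ x j) ∧ Matrix.mulVec A x = 0) := by
  by_cases hQ : ∃ x : Fin n → ℝ, x ≠ 0 ∧ (∀ j, 0 ≤ x j) ∧ Matrix.mulVec A x = 0
  · exact Or.inr ⟨hQ, fun hP => gordan_not_both A hP hQ⟩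
  · exact Or.inl ⟨gordan_exists A hQ, hQ⟩
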